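/- Let A be a symmetric real n×n matrix. Then every matrix B with A − I ≤ B ≤ A + I (entrywise) is invertible if and only if every eigenvalue λ of A satisfies |λ| > 1. -/

import Mathlib

open Matrix

theorem stmt_1 (n : ℕ) (A : Matrix (Fin n) (Fin n) ℝ) (hA : A.IsHermitian) :
    (∀ B : Matrix (Fin n) (Fin n) ℝ,
        (∀ i j, (A - 1) i j ≤ B i j) → (∀ i j, B i j ≤ (A + 1) i j) → IsUnit B) ↔
      ∀ i, 1 < |hA.eigenvalues i| := by
  have hAT : A.transpose = A := by
    ext i j
    simpa using congrFun (congrFun hA i) j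
  constructor
  · intro hreg i
    by_contra hle
    push_neg at hle
    obtain ⟨hl1, hl2⟩ := abs_le.mp hle
    set lam := hA.eigenvalues i with hlam
    have hu := hreg (A - lam • 1) ?_ ?_
    · -- A - lam • 1 is singular
      have he : (A - lam • (1 : Matrix (Fin n) (Fin n) ℝ)) *ᵥ ⇑(hA.eigenvectorBasis i) = 0 := by
        rw [Matrix.sub_mulVec, hA.mulVec_eigenvectorBasis]
        simp [Matrix.smul_mulVec, hlam]
      have hne : ⇑(hA.eigenvectorBasis i) ≠ 0 := by
        have := hA.eigenvectorBasis.orthonormal.ne_zero i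
        intro h
        apply this
        ext k
        exact congrFun h k
      have hdet : (A - lam • (1 : Matrix (Fin n) (Fin n) ℝ)).det = 0 :=
        Matrix.exists_mulVec_eq_zero_iff.mp ⟨_, hne, he⟩
      rw [Matrix.isUnit_iff_isUnit_det, hdet] at hu
      exact (by simp : ¬ IsUnit (0 : ℝ)) hu
    · intro a b
      rcases eq_or_ne a b with h | h
      · subst h
        simp only [Matrix.sub_apply, Matrix.smul_apply, Matrix.one_apply_eq, smul_eq_mul, mul_one]
        linarith
      · simp [Matrix.sub_apply, Matrix.smul_apply, Matrix.one_apply_ne h]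
    · intro a b
      rcases eq_or_ne a b with h | h
      · subst h
        simp only [Matrix.sub_apply, Matrix.add_apply, Matrix.smul_apply, Matrix.one_apply_eq,
          smul_eq_mul, mul_one]
        linarith
      · simp [Matrix.sub_apply, Matrix.add_apply, Matrix.smul_apply, Matrix.one_apply_ne h]
  · intro hev B hBl hBu
    rw [Matrix.isUnit_iff_isUnit_det, isUnit_iff_ne_zero]
    intro hdet
    obtain ⟨v, hv, hBv⟩ := Matrix.exists_mulVec_eq_zero_iff.mpr hdet
    set d : Fin n → ℝ := fun i => B i i - A i i with hd
    have hoff : ∀ i j, i ≠ j → B i j = A i j := by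
      intro i j hij
      have h1 := hBl i j
      have h2 := hBu i j
      simp [Matrix.sub_apply, Matrix.add_apply, Matrix.one_apply_ne hij] at h1 h2
      linarith
    have hdiag : ∀ i, |d i| ≤ 1 := by
      intro i
      have h1 := hBl i i
      have h2 := hBu i i
      simp only [Matrix.sub_apply, Matrix.add_apply, Matrix.one_apply_eq] at h1 h2
      rw [abs_le]
      constructor <;> simp [hd] <;> linarith
    have hAv : ∀ i, (A *ᵥ v) i = -(d i * v i) := by
      intro i
      have h0 : (B *ᵥ v) i = 0 := by rw [hBv]; rfl
      have hsub : (B *ᵥ v) i - (A *ᵥ v) i = d i * v i := by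
        simp only [Matrix.mulVec, dotProduct]
        rw [← Finset.sum_sub_distrib]
        rw [Finset.sum_eq_single i]
        · simp [hd]; ring
        · intro j _ hj
          rw [hoff i j (Ne.symm hj)]
          ring
        · simp
      rw [h0] at hsub
      linarith
    -- spectral analysis
    set b := hA.eigenvectorBasis with hb
    have hV : (WithLp.toLp 2 v : EuclideanSpace ℝ (Fin n)) ≠ 0 := by
      intro h
      apply hv
      ext k
      exact congrFun (congrArg (fun x : EuclideanSpace ℝ (Fin n) => x.ofLp) h) k
    set c : Fin n → ℝ := fun j => b.repr (WithLp.toLp 2 v : EuclideanSpace ℝ (Fin n)) j with hc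
    have hcAv : ∀ j, b.repr (WithLp.toLp 2 (A *ᵥ v) : EuclideanSpace ℝ (Fin n)) j
        = hA.eigenvalues j * c j := by
      intro j
      simp only [hc, OrthonormalBasis.repr_apply_apply]
      show (inner ℝ (b j) (WithLp.toLp 2 (A *ᵥ v) : EuclideanSpace ℝ (Fin n)) : ℝ)
        = hA.eigenvalues j * inner ℝ (b j) (WithLp.toLp 2 v : EuclideanSpace ℝ (Fin n))
      rw [PiLp.inner_apply, PiLp.inner_apply]
      simp only [RCLike.inner_apply', starRingEnd_apply, star_trivial]
      have : ∀ x : Fin n → ℝ, ∑ i, (b j) i * x i = (⇑(b j)) ⬝ᵥ x := fun x => rfl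
      rw [this, this, Matrix.dotProduct_mulVec, ← Matrix.mulVec_transpose, hAT,
        hA.mulVec_eigenvectorBasis]
      simp [smul_dotProduct, Finset.mul_sum, hb]
    have parseval : ∀ x : EuclideanSpace ℝ (Fin n),
        ∑ i, (x i) ^ 2 = ∑ j, (b.repr x j) ^ 2 := by
      intro x
      have h1 : (inner ℝ x x : ℝ) = (inner ℝ (b.repr x) (b.repr x) : ℝ) :=
        (b.repr.inner_map_map x x).symm
      rw [PiLp.inner_apply, PiLp.inner_apply] at h1
      simp only [RCLike.inner_apply', starRingEnd_apply, star_trivial] at h1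
      calc ∑ i, (x i) ^ 2 = ∑ i, x i * x i := by simp [sq]
        _ = ∑ j, b.repr x j * b.repr x j := h1
        _ = ∑ j, (b.repr x j) ^ 2 := by simp [sq]
    have sumV : ∑ i, (v i) ^ 2 = ∑ j, (c j) ^ 2 := parseval (WithLp.toLp 2 v : EuclideanSpace ℝ (Fin n))
    have sumAV : ∑ i, ((A *ᵥ v) i) ^ 2 = ∑ j, (hA.eigenvalues j * c j) ^ 2 := by
      rw [parseval (WithLp.toLp 2 (A *ᵥ v) : EuclideanSpace ℝ (Fin n))]
      exact Finset.sum_congr rfl fun j _ => by rw [hcAv j]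
    have h1 : ∑ i, ((A *ᵥ v) i) ^ 2 ≤ ∑ i, (v i) ^ 2 := by
      apply Finset.sum_le_sum
      intro i _
      rw [hAv i]
      have hdi := abs_le.mp (hdiag i)
      nlinarith [mul_nonneg (mul_nonneg (by linarith : (0:ℝ) ≤ 1 - d i)
        (by linarith : (0:ℝ) ≤ 1 + d i)) (sq_nonneg (v i))]
    have hcj : ∃ j, c j ≠ 0 := by
      by_contra h
      push_neg at h
      apply hV
      apply b.repr.injective
      ext j
      simpa using h j
    obtain ⟨j0, hj0⟩ := hcj
    have h2 : ∑ j, (c j) ^ 2 < ∑ j, (hA.eigenvalues j * c j) ^ 2 := by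
      have hsq : ∀ j, 1 < hA.eigenvalues j ^ 2 := by
        intro j
        have := hev j
        rw [← sq_abs]
        nlinarith [abs_nonneg (hA.eigenvalues j)]
      apply Finset.sum_lt_sum (f := fun j => (c j) ^ 2)
      · intro j _
        have h := hsq j
        nlinarith [mul_nonneg (by linarith : (0:ℝ) ≤ hA.eigenvalues j ^ 2 - 1) (sq_nonneg (c j))]
      · refine ⟨j0, Finset.mem_univ j0, ?_⟩
        have h := hsq j0
        have hc0 : 0 < (c j0) ^ 2 := by positivity
        nlinarith [mul_pos (by linarith : (0:ℝ) < hA.eigenvalues j0 ^ 2 - 1) hc0]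
    rw [sumAV, sumV] at h1
    linarith
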